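/- Let p be a distribution on [n] with ||p||_2^2 = (1+α)/n for some α ≥ 0, and write p_i = 1/n + a_i. Then ||p||_3^3 − ||p||_2^4 ≤ (3/n)(α/n) + (α/n)^{3/2}. -/

import Mathlib

open Finset

/-- Let `p` be a distribution on `[n]` with `‖p‖₂² = (1+α)/n`, `α ≥ 0`. Then
`‖p‖₃³ − ‖p‖₂⁴ ≤ (3/n)(α/n) + (α/n)^{3/2}`. -/
theorem third_moment_bound (n : ℕ) (hn : 0 < n) (α : ℝ) (hα : 0 ≤ α)
    (p : Fin n → ℝ) (hp : ∀ i, 0 ≤ p i) (hp1 : ∑ i, p i = 1)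
    (hl2 : ∑ i, (p i) ^ 2 = (1 + α) / n) :
    (∑ i, (p i) ^ 3) - (∑ i, (p i) ^ 2) ^ 2
      ≤ (3 / (n : ℝ)) * (α / n) + (α / n) ^ ((3 : ℝ) / 2) := by
  have hn0 : (0:ℝ) < n := by exact_mod_cast hn
  set a : Fin n → ℝ := fun i => p i - 1 / n with ha
  have hx : (0:ℝ) ≤ α / n := by positivity
  set s := Real.sqrt (α / n) with hs
  have hs0 : 0 ≤ s := Real.sqrt_nonneg _
  have hs2 : s ^ 2 = α / n := Real.sq_sqrt hx
  have hA1 : ∑ i, a i = 0 := by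
    simp only [ha, Finset.sum_sub_distrib, hp1, Finset.sum_const, card_univ,
      Fintype.card_fin, nsmul_eq_mul]
    field_simp
    norm_num
  have hA2 : ∑ i, (a i) ^ 2 = α / n := by
    have : ∀ i ∈ (univ : Finset (Fin n)), (a i) ^ 2
        = p i ^ 2 - (2 / n) * p i + 1 / n ^ 2 := by
      intro i _; simp only [ha]; ring
    rw [Finset.sum_congr rfl this]
    simp only [Finset.sum_add_distrib, Finset.sum_sub_distrib, ← Finset.mul_sum,
      hp1, hl2, Finset.sum_const, card_univ, Fintype.card_fin, nsmul_eq_mul]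
    field_simp
    ring
  have hS3 : ∑ i, (p i) ^ 3
      = (∑ i, (a i) ^ 3) + (3 / n) * (α / n) + 1 / n ^ 2 := by
    have : ∀ i ∈ (univ : Finset (Fin n)), (p i) ^ 3
        = (a i) ^ 3 + (3 / n) * (a i) ^ 2 + (3 / n ^ 2) * a i + 1 / n ^ 3 := by
      intro i _; simp only [ha]; field_simp; ring
    rw [Finset.sum_congr rfl this]
    simp only [Finset.sum_add_distrib, ← Finset.mul_sum, hA1, hA2,
      Finset.sum_const, card_univ, Fintype.card_fin, nsmul_eq_mul]
    field_simp
    ring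
  have hA3 : ∑ i, (a i) ^ 3 ≤ s ^ 3 := by
    have hle : ∀ i ∈ (univ : Finset (Fin n)), (a i) ^ 3 ≤ s * (a i) ^ 2 := by
      intro i _
      have h1 : (a i) ^ 2 ≤ α / n := by
        rw [← hA2]
        exact Finset.single_le_sum (fun j _ => sq_nonneg (a j)) (mem_univ i)
      have h2 : a i ≤ s := by
        calc a i ≤ |a i| := le_abs_self _
          _ = Real.sqrt ((a i) ^ 2) := (Real.sqrt_sq_eq_abs _).symm
          _ ≤ s := Real.sqrt_le_sqrt h1
      calc (a i) ^ 3 = a i * (a i) ^ 2 := by ring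
        _ ≤ s * (a i) ^ 2 := mul_le_mul_of_nonneg_right h2 (sq_nonneg _)
    calc ∑ i, (a i) ^ 3 ≤ ∑ i, s * (a i) ^ 2 := Finset.sum_le_sum hle
      _ = s * (α / n) := by rw [← Finset.mul_sum, hA2]
      _ = s ^ 3 := by rw [← hs2]; ring
  have hrpow : (α / n) ^ ((3:ℝ)/2) = s ^ 3 := by
    rw [hs, Real.sqrt_eq_rpow, ← Real.rpow_natCast ((α/n) ^ ((1:ℝ)/2)) 3,
      ← Real.rpow_mul hx]
    norm_num
  rw [hS3, hl2, hrpow]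
  have h1 : ((1 + α) / n) ^ 2 ≥ 1 / n ^ 2 := by
    rw [div_pow]
    apply div_le_div_of_nonneg_right _ (by positivity)
    nlinarith
  nlinarith [hA3]
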